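/- Let G and H be finite connected simple graphs, fix a root (r_G, r_H) of G□H, and let p_0 = r_H, p_1, …, p_α be a path in H (p_{i} adjacent to p_{i+1} in H) of edge length α ≥ 1. Let c be a pebbling configuration on G□H such that c̃_{p_i} ≥ |V(G)| for each i = 1, …, α and Σ_{i=1}^{α} 2^{α−i}·(c̃_{p_i} − |V(G)|) ≥ 2^{α}·(π(G) − c̃_{r_H}). Then c is (r_G, r_H)-solvable. -/

import Mathlib

open SimpleGraph Finset

/-- A single pebbling move on `G`: remove two pebbles from a vertex `v` with at least two
pebbles and add one pebble to an adjacent vertex `w`. -/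
def PebblingMove {V : Type*} (G : SimpleGraph V) (c c' : V → ℕ) : Prop :=
  ∃ v w, G.Adj v w ∧ 2 ≤ c v ∧ c' v = c v - 2 ∧ c' w = c w + 1 ∧
    ∀ u, u ≠ v → u ≠ w → c' u = c u

/-- Some finite sequence of pebbling moves starting from `c` places at least `t` pebbles
on the vertex `r`. -/
def NSolvable {V : Type*} (G : SimpleGraph V) (c : V → ℕ) (r : V) (t : ℕ) : Prop :=
  ∃ c', Relation.ReflTransGen (PebblingMove G) c c' ∧ t ≤ c' r

/-- A configuration `c` is `r`-solvable. -/
def Solvable {V : Type*} (G : SimpleGraph V) (c : V → ℕ) (r : V) : Prop :=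
  NSolvable G c r 1

/-- The pebbling number `π(G)`: least `k` such that every configuration of size `k` is
`r`-solvable for every root `r`. -/
noncomputable def pebblingNumber {V : Type*} (G : SimpleGraph V) [Fintype V] : ℕ :=
  sInf {k | ∀ c : V → ℕ, (∑ v, c v) = k → ∀ r, Solvable G c r}

/-- The 2-pebbling number `π₂(G, s)`: least `m` such that for every root `r`, every
configuration of size at least `m` with support of size exactly `s` can place two pebbles
on `r`. -/
noncomputable def twoPebblingNumber {V : Type*} (G : SimpleGraph V) [Fintype V] (s : ℕ) : ℕ :=
  sInf {m | ∀ (r : V) (c : V → ℕ), m ≤ ∑ v, c v →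
    (Finset.univ.filter fun v => 1 ≤ c v).card = s → NSolvable G c r 2}

section Aux

open Relation

variable {V : Type*} (G : SimpleGraph V)

private lemma pmove_mono {c c' d : V → ℕ} (h : PebblingMove G c c')
    (hcd : ∀ v, c v ≤ d v) : ∃ d', PebblingMove G d d' ∧ ∀ v, c' v ≤ d' v := by
  classical
  obtain ⟨v, w, hadj, h2, hv, hw, ho⟩ := h
  have hvw : v ≠ w := hadj.ne
  refine ⟨fun u => if u = v then d v - 2 else if u = w then d w + 1 else d u,
    ⟨v, w, hadj, le_trans h2 (hcd v), by simp, by simp [Ne.symm hvw], ?_⟩, ?_⟩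
  · intro u huv huw; simp [huv, huw]
  · intro u
    by_cases h1 : u = v
    · subst h1; have := hcd u; simp [hvw]; omega
    by_cases h2' : u = w
    · subst h2'; have := hcd u; simp [h1]; omega
    · rw [ho u h1 h2']; simp [h1, h2']; exact hcd u

private lemma reach_mono {c c' : V → ℕ} (h : ReflTransGen (PebblingMove G) c c') :
    ∀ d, (∀ v, c v ≤ d v) → ∃ d', ReflTransGen (PebblingMove G) d d' ∧ ∀ v, c' v ≤ d' v := by
  induction h with
  | refl => exact fun d hd => ⟨d, ReflTransGen.refl, hd⟩
  | tail _ hstep ih =>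
      intro d hd
      obtain ⟨d1, hr1, hle1⟩ := ih d hd
      obtain ⟨d2, hstep2, hle2⟩ := pmove_mono G hstep hle1
      exact ⟨d2, hr1.tail hstep2, hle2⟩

private lemma nsolvable_mono {c d : V → ℕ} {r : V} {t : ℕ} (h : NSolvable G c r t)
    (hcd : ∀ v, c v ≤ d v) : NSolvable G d r t := by
  obtain ⟨c', hr, hc'⟩ := h
  obtain ⟨d', hr', hle⟩ := reach_mono G hr d hcd
  exact ⟨d', hr', le_trans hc' (hle r)⟩

private lemma moveMany {v w : V} (hadj : G.Adj v w) (t : ℕ) :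
    ∀ c : V → ℕ, 2 * t ≤ c v →
    ∃ c', ReflTransGen (PebblingMove G) c c' ∧ c' v = c v - 2 * t ∧
      c' w = c w + t ∧ ∀ u, u ≠ v → u ≠ w → c' u = c u := by
  classical
  induction t with
  | zero => intro c _; exact ⟨c, ReflTransGen.refl, by omega, by omega, fun _ _ _ => rfl⟩
  | succ t ih =>
      intro c hc
      have hvw : v ≠ w := hadj.ne
      set c1 : V → ℕ := fun u => if u = v then c v - 2 else if u = w then c w + 1 else c u with hc1
      have hstep : PebblingMove G c c1 :=
        ⟨v, w, hadj, by omega, by simp [hc1], by simp [hc1, Ne.symm hvw],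
          fun u h1 h2 => by simp [hc1, h1, h2]⟩
      obtain ⟨c', hr, hv', hw', ho'⟩ := ih c1 (by simp [hc1]; omega)
      refine ⟨c', ReflTransGen.head hstep hr, ?_, ?_, ?_⟩
      · rw [hv']; simp [hc1]; omega
      · rw [hw']; simp [hc1, Ne.symm hvw]; omega
      · intro u h1 h2; rw [ho' u h1 h2]; simp [hc1, h1, h2]

private lemma shrink {α : Type*} [Fintype α] :
    ∀ (k : ℕ) (f : α → ℕ) (m : ℕ), (∑ v, f v) = m + k →
    ∃ f' : α → ℕ, (∀ v, f' v ≤ f v) ∧ ∑ v, f' v = m := by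
  intro k
  induction k with
  | zero => intro f m h; exact ⟨f, fun _ => le_rfl, by omega⟩
  | succ k ih =>
      intro f m h
      classical
      have hpos : ∃ v, 0 < f v := by
        by_contra hn
        push_neg at hn
        have : ∑ v, f v = 0 := Finset.sum_eq_zero (fun v _ => by have := hn v; omega)
        omega
      obtain ⟨v0, hv0⟩ := hpos
      have hsum0 : ∑ v, Function.update f v0 (f v0 - 1) v = m + k := by
        rw [Finset.sum_update_of_mem (Finset.mem_univ v0)]
        have h2 : ∑ v, f v = f v0 + ∑ x ∈ Finset.univ \ {v0}, f x := by
          rw [Finset.sum_eq_sum_sdiff_singleton_add (Finset.mem_univ v0)]; ring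
        omega
      obtain ⟨f', hle, hsum⟩ := ih (Function.update f v0 (f v0 - 1)) m hsum0
      refine ⟨f', fun v => ?_, hsum⟩
      by_cases hv : v = v0
      · subst hv; have := hle v; rw [Function.update_self] at this; omega
      · have := hle v; rwa [Function.update_of_ne hv] at this

private lemma pow_solvable {v r : V} (w : G.Walk v r) :
    ∀ c : V → ℕ, 2 ^ w.length ≤ c v → Solvable G c r := by
  induction w with
  | nil => intro c hc; exact ⟨c, ReflTransGen.refl, by simpa using hc⟩
  | cons hadj w ih =>
      intro c hc
      rw [SimpleGraph.Walk.length_cons, pow_succ] at hc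
      obtain ⟨c1, hr1, _, hw1, _⟩ := moveMany G hadj (2 ^ w.length) c (by omega)
      obtain ⟨c2, hr2, hc2⟩ := ih c1 (by omega)
      exact ⟨c2, hr1.trans hr2, hc2⟩

private lemma pebblingNumber_spec {V : Type*} [Fintype V] [Nonempty V] (G : SimpleGraph V)
    (hG : G.Connected) :
    ∀ c : V → ℕ, pebblingNumber G ≤ ∑ v, c v → ∀ r, Solvable G c r := by
  classical
  have hne : {k | ∀ c : V → ℕ, (∑ v, c v) = k → ∀ r, Solvable G c r}.Nonempty := by
    refine ⟨Fintype.card V * (2 ^ (Fintype.card V - 1) - 1) + 1, ?_⟩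
    intro c hc r
    have hex : ∃ v, 2 ^ (Fintype.card V - 1) ≤ c v := by
      by_contra hn
      push_neg at hn
      have hb : ∑ v, c v ≤ ∑ _v : V, (2 ^ (Fintype.card V - 1) - 1) :=
        Finset.sum_le_sum (fun v _ => by have := hn v; omega)
      rw [Finset.sum_const, Finset.card_univ, smul_eq_mul] at hb
      omega
    obtain ⟨v, hv⟩ := hex
    obtain ⟨w⟩ := hG.preconnected v r
    have hlen : w.toPath.1.length < Fintype.card V := w.toPath.2.length_lt
    exact pow_solvable G w.toPath.1 c
      (le_trans (Nat.pow_le_pow_right (by norm_num) (by omega)) hv)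
  have hmem := Nat.sInf_mem hne
  rw [Set.mem_setOf_eq] at hmem
  intro c hle r
  obtain ⟨f', hle', hsum'⟩ := shrink (∑ v, c v - pebblingNumber G) c (pebblingNumber G) (by
    have : pebblingNumber G ≤ ∑ v, c v := hle
    omega)
  exact nsolvable_mono G (hmem f' hsum' r) hle'

private lemma slice_lift {α β : Type*} (G : SimpleGraph α) (H : SimpleGraph β)
    (c : α × β → ℕ) (q : β) (rG : α)
    (h : Solvable G (fun g => c (g, q)) rG) : Solvable (G.boxProd H) c (rG, q) := by
  classical
  obtain ⟨d, hr, hd⟩ := h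
  set patch : (α → ℕ) → (α × β → ℕ) := fun e x => if x.2 = q then e x.1 else c x with hpatch
  have hlift : ∀ e e', PebblingMove G e e' → PebblingMove (G.boxProd H) (patch e) (patch e') := by
    rintro e e' ⟨v, w, hadj, h2, hv, hw, ho⟩
    refine ⟨(v, q), (w, q), Or.inl ⟨hadj, rfl⟩, by simpa [hpatch] using h2,
      by simp [hpatch, hv], by simp [hpatch, hw], ?_⟩
    rintro ⟨u1, u2⟩ hu1 hu2
    by_cases hq : u2 = q
    · subst hq
      have h1 : u1 ≠ v := fun h => hu1 (by rw [h])
      have h2' : u1 ≠ w := fun h => hu2 (by rw [h])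
      simp [hpatch, ho u1 h1 h2']
    · simp [hpatch, hq]
  have hreach : ReflTransGen (PebblingMove (G.boxProd H)) (patch fun g => c (g, q)) (patch d) :=
    ReflTransGen.lift patch (fun a b hab => hlift a b hab) _ _ hr
  have hcp : patch (fun g => c (g, q)) = c := by
    funext x
    obtain ⟨x1, x2⟩ := x
    by_cases hq : x2 = q
    · subst hq; simp [hpatch]
    · simp [hpatch, hq]
  exact ⟨patch d, by rwa [hcp] at hreach, by simpa [hpatch] using hd⟩

private lemma columns {α β : Type*} [DecidableEq α] [DecidableEq β]
    (G : SimpleGraph α) (H : SimpleGraph β)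
    {q q' : β} (hq : H.Adj q q') (t : α → ℕ) :
    ∀ (s : Finset α) (c : α × β → ℕ), (∀ g, 2 * t g ≤ c (g, q)) →
    ∃ c' : α × β → ℕ, ReflTransGen (PebblingMove (G.boxProd H)) c c' ∧
      ∀ x : α × β, c' x = if x.1 ∈ s ∧ x.2 = q then c x - 2 * t x.1
        else if x.1 ∈ s ∧ x.2 = q' then c x + t x.1 else c x := by
  classical
  intro s
  induction s using Finset.induction_on with
  | empty => intro c _; exact ⟨c, ReflTransGen.refl, by simp⟩
  | @insert g s hgs ih =>
      intro c hc
      obtain ⟨c1, hr1, hc1⟩ := ih c hc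
      have hqq' : q ≠ q' := hq.ne
      have hc1gq : c1 (g, q) = c (g, q) := by rw [hc1]; simp [hgs, hqq']
      obtain ⟨c2, hr2, hv2, hw2, ho2⟩ := moveMany (G.boxProd H)
        (show (G.boxProd H).Adj (g, q) (g, q') from Or.inr ⟨hq, rfl⟩) (t g) c1
        (by rw [hc1gq]; exact hc g)
      refine ⟨c2, hr1.trans hr2, ?_⟩
      rintro ⟨x1, x2⟩
      by_cases hx1 : x1 = g
      · by_cases hx2 : x2 = q
        · simp only [hx1, hx2]
          rw [hv2, hc1gq]; simp
        · by_cases hx2' : x2 = q'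
          · simp only [hx1, hx2']
            have hg' : c1 (g, q') = c (g, q') := by rw [hc1]; simp [hgs, Ne.symm hqq']
            rw [hw2, hg']; simp [Ne.symm hqq']
          · simp only [hx1]
            rw [ho2 _ (by simp [hx2]) (by simp [hx2']), hc1]
            simp [hx2, hx2']
      · rw [ho2 _ (by simp [hx1]) (by simp [hx1]), hc1]
        simp [hx1]

private def fAux (e : ℕ → ℕ) (n a : ℕ) : ℕ → ℕ
  | 0 => 0
  | k + 1 => (e (a - k) + fAux e n a k - n + 1) / 2

private lemma keyArith (e : ℕ → ℕ) (n a : ℕ) (hsat : ∀ i, 1 ≤ i → i ≤ a → n ≤ e i) :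
    ∀ k, k < a → ∑ j ∈ Finset.Icc (a - k) a, 2 ^ (a - j) * (e j - n) ≤
      2 ^ (k + 1) * fAux e n a (k + 1) := by
  intro k
  induction k with
  | zero =>
      intro hk
      rw [Nat.sub_zero, Finset.Icc_self, Finset.sum_singleton, Nat.sub_self]
      have hsa := hsat a (by omega) le_rfl
      have h1 : fAux e n a 1 = (e a + 0 - n + 1) / 2 := by
        show (e (a - 0) + fAux e n a 0 - n + 1) / 2 = _
        simp [fAux]
      rw [pow_zero, pow_one, one_mul, h1]
      omega
  | succ k ih =>
      intro hk
      have ihh := ih (by omega)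
      have h1 : 1 ≤ a - (k + 1) := by omega
      have hik : a - k = (a - (k + 1)) + 1 := by omega
      have hIcc : Finset.Icc (a - (k + 1)) a = insert (a - (k + 1)) (Finset.Icc (a - k) a) := by
        ext x; simp only [Finset.mem_insert, Finset.mem_Icc]; omega
      rw [hIcc, Finset.sum_insert (by simp only [Finset.mem_Icc]; omega)]
      have hfi : fAux e n a (k + 2) = (e (a - (k + 1)) + fAux e n a (k + 1) - n + 1) / 2 := by
        simp [fAux]
      have hsi := hsat (a - (k + 1)) h1 (by omega)
      have haik : a - (a - (k + 1)) = k + 1 := by omega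
      rw [haik]
      have h2f : (e (a - (k + 1)) - n) + fAux e n a (k + 1) ≤ 2 * fAux e n a (k + 2) := by omega
      calc 2 ^ (k + 1) * (e (a - (k + 1)) - n) + ∑ j ∈ Finset.Icc (a - k) a, 2 ^ (a - j) * (e j - n)
          ≤ 2 ^ (k + 1) * (e (a - (k + 1)) - n) + 2 ^ (k + 1) * fAux e n a (k + 1) :=
            Nat.add_le_add_left ihh _
        _ = 2 ^ (k + 1) * ((e (a - (k + 1)) - n) + fAux e n a (k + 1)) := by ring
        _ ≤ 2 ^ (k + 1) * (2 * fAux e n a (k + 2)) := Nat.mul_le_mul_left _ h2f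
        _ = 2 ^ (k + 2) * fAux e n a (k + 2) := by ring

end Aux

/-- constraint B.3(K, P) is valid: given a path `r_H = p 0 ~ p 1 ~ ⋯ ~ p a`
in `H` (`a ≥ 1`) whose non-root slices are all 1-saturated, if
`Σ_{i=1}^{a} 2^{a-i}·(c̃_{p i} - |V(G)|) ≥ 2^a·(π(G) - c̃_{r_H})`, then the configuration
is solvable. -/
theorem stmt11 {α β : Type*} [Fintype α] [Fintype β]
    (G : SimpleGraph α) (H : SimpleGraph β) (hG : G.Connected) (hH : H.Connected)
    (c : α × β → ℕ) (rG : α) (rH : β)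
    (a : ℕ) (ha : 1 ≤ a) (p : ℕ → β) (hp0 : p 0 = rH)
    (hpath : ∀ i < a, H.Adj (p i) (p (i + 1)))
    (hinj : ∀ i ≤ a, ∀ j ≤ a, p i = p j → i = j)
    (hsat : ∀ i, 1 ≤ i → i ≤ a → Fintype.card α ≤ ∑ i' : α, c (i', p i))
    (hsum : 2 ^ a * (pebblingNumber G - ∑ i' : α, c (i', rH))
        ≤ ∑ i ∈ Finset.Icc 1 a, 2 ^ (a - i) * ((∑ i' : α, c (i', p i)) - Fintype.card α)) :
    Solvable (G.boxProd H) c (rG, rH) := by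
  classical
  have _ : Nonempty α := ⟨rG⟩
  set n := Fintype.card α with hn
  set E : ℕ → ℕ := fun i => ∑ g : α, c (g, p i) with hE
  have hEsat : ∀ i, 1 ≤ i → i ≤ a → n ≤ E i := fun i h1 h2 => hsat i h1 h2
  -- Main transfer claim, by induction on the number of processed slices.
  have claim : ∀ k, k ≤ a →
      ∃ c' : α × β → ℕ, Relation.ReflTransGen (PebblingMove (G.boxProd H)) c c' ∧
        (∀ j, j < a - k → ∀ g : α, c' (g, p j) = c (g, p j)) ∧
        E (a - k) + fAux E n a k ≤ ∑ g : α, c' (g, p (a - k)) := by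
    intro k
    induction k with
    | zero =>
        intro _
        exact ⟨c, Relation.ReflTransGen.refl, fun _ _ _ => rfl, by simp [fAux, hE]⟩
    | succ k ih =>
        intro hk1
        obtain ⟨c1, hr1, hun1, htot1⟩ := ih (by omega)
        have hik : a - k = (a - (k + 1)) + 1 := by omega
        set i := a - (k + 1) with hidef
        have hi_lt : i < a := by omega
        rw [hik] at htot1 hun1
        -- source slice p (i+1) has total at least E (i+1) + fAux k
        have hhalf : ∑ g : α, c1 (g, p (i + 1)) ≤ 2 * (∑ g : α, c1 (g, p (i + 1)) / 2) + n := by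
          calc ∑ g : α, c1 (g, p (i + 1))
              ≤ ∑ g : α, (2 * (c1 (g, p (i + 1)) / 2) + 1) :=
                Finset.sum_le_sum (fun g _ => by omega)
            _ = 2 * (∑ g : α, c1 (g, p (i + 1)) / 2) + n := by
                rw [Finset.sum_add_distrib, ← Finset.mul_sum]
                simp [hn, Finset.card_univ]
        have hfk1 : fAux E n a (k + 1) = (E (i + 1) + fAux E n a k - n + 1) / 2 := by
          show (E (a - k) + fAux E n a k - n + 1) / 2 = _
          rw [hik]
        have hsatI := hEsat (i + 1) (by omega) (by omega)
        have ht : fAux E n a (k + 1) ≤ ∑ g : α, c1 (g, p (i + 1)) / 2 := by omega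
        -- choose how much each column sends
        obtain ⟨t, htle, htsum⟩ := shrink ((∑ g : α, c1 (g, p (i + 1)) / 2) - fAux E n a (k + 1))
          (fun g => c1 (g, p (i + 1)) / 2) (fAux E n a (k + 1)) (by beta_reduce; omega)
        obtain ⟨c2, hr2, hc2⟩ := columns G H ((hpath i hi_lt).symm) t Finset.univ c1
          (fun g => by have := htle g; omega)
        refine ⟨c2, hr1.trans hr2, ?_, ?_⟩
        · intro j hj g
          have hj1 : p j ≠ p (i + 1) := fun h => by
            have := hinj j (by omega) (i + 1) (by omega) h; omega
          have hj2 : p j ≠ p i := fun h => by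
            have := hinj j (by omega) i (by omega) h; omega
          rw [hc2, hun1 j (by omega) g]
          simp [hj1, hj2]
        · have hne1 : p i ≠ p (i + 1) := fun h => by
            have := hinj i (by omega) (i + 1) (by omega) h; omega
          have hslice : ∀ g : α, c2 (g, p i) = c1 (g, p i) + t g := by
            intro g
            rw [hc2]
            simp [hne1]
          have hc1i : ∀ g : α, c1 (g, p i) = c (g, p i) := fun g => hun1 i (by omega) g
          have : ∑ g : α, c2 (g, p i) = E i + fAux E n a (k + 1) := by
            rw [Finset.sum_congr rfl (fun g _ => hslice g), Finset.sum_add_distrib,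
              Finset.sum_congr rfl (fun g _ => hc1i g), htsum, hE]
          omega
  obtain ⟨c', hr, _, htot⟩ := claim a le_rfl
  rw [Nat.sub_self] at htot
  -- arithmetic: the root slice now holds at least π(G) pebbles
  have hkey := keyArith E n a hEsat (a - 1) (by omega)
  rw [show a - (a - 1) = 1 from by omega, show a - 1 + 1 = a from by omega] at hkey
  have hsum2 : 2 ^ a * (pebblingNumber G - E 0) ≤
      ∑ j ∈ Finset.Icc 1 a, 2 ^ (a - j) * (E j - n) := by
    rw [hE, hn]
    simpa [hp0] using hsum
  have hfin : 2 ^ a * (pebblingNumber G - E 0) ≤ 2 ^ a * fAux E n a a :=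
    le_trans hsum2 hkey
  have hpow : 0 < 2 ^ a := Nat.pow_pos (by norm_num)
  have hf1 : pebblingNumber G - E 0 ≤ fAux E n a a := Nat.le_of_mul_le_mul_left hfin hpow
  have hroot : pebblingNumber G ≤ ∑ g : α, c' (g, p 0) := by omega
  rw [hp0] at hroot
  have hsolve : Solvable G (fun g => c' (g, rH)) rG :=
    pebblingNumber_spec G hG (fun g => c' (g, rH)) hroot rG
  obtain ⟨c'', hr'', hc''⟩ := slice_lift G H c' rH rG hsolve
  exact ⟨c'', hr.trans hr'', hc''⟩
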